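/- Let X be a Fréchet space with a Schauder basis (e_n)_{n≥0} and seminorms (p_j). Then X possesses a continuous norm if and only if there exists j ≥ 1 such that p_j(e_n) > 0 for every n ≥ 0. -/

import Mathlib

open Filter Finset


lemma aux_baire {X : Type*} [AddCommGroup X] [Module ℝ X] [UniformSpace X]
    [IsUniformAddGroup X] [CompleteSpace X]
    (p : SeminormFamily ℝ X ℕ) (hp : WithSeminorms p) : BaireSpace X := by
  haveI : FirstCountableTopology X := hp.firstCountableTopology
  haveI : (uniformity X).IsCountablyGenerated :=
    IsUniformAddGroup.uniformity_countably_generated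
  letI M : PseudoMetricSpace X := UniformSpace.pseudoMetricSpace X
  exact BaireSpace.of_completelyPseudoMetrizable

lemma aux_cauchy {X : Type*} [AddCommGroup X] [Module ℝ X] [UniformSpace X]
    [IsUniformAddGroup X] (p : SeminormFamily ℝ X ℕ) (hp : WithSeminorms p)
    (T : ℕ → X) (h : ∀ j, ∀ ε > (0:ℝ), ∃ N₀, ∀ N ≥ N₀, ∀ M ≥ N₀, p j (T N - T M) < ε) :
    CauchySeq T := by
  have key : Tendsto (fun q : ℕ × ℕ => T q.2 - T q.1) atTop (nhds 0) := by
    rw [hp.tendsto_nhds]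
    intro j ε hε
    obtain ⟨N₀, hN₀⟩ := h j ε hε
    rw [← prod_atTop_atTop_eq, eventually_prod_iff]
    exact ⟨fun N => N₀ ≤ N, eventually_ge_atTop N₀, fun M => N₀ ≤ M, eventually_ge_atTop N₀,
      fun {N} hN {M} hM => by simpa using hN₀ M hM N hN⟩
  rw [CauchySeq, cauchy_map_iff]
  refine ⟨atTop_neBot, ?_⟩
  rw [uniformity_eq_comap_nhds_zero X, tendsto_comap_iff]
  rw [← prod_atTop_atTop_eq] at key
  exact key

set_option maxHeartbeats 1000000 in
lemma main_hard {X : Type*} [AddCommGroup X] [Module ℝ X] [UniformSpace X]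
    [IsUniformAddGroup X] [CompleteSpace X] [ContinuousSMul ℝ X]
    (p : SeminormFamily ℝ X ℕ) (hp : WithSeminorms p)
    (hsep : ∀ x : X, x ≠ 0 → ∃ j, p j x ≠ 0)
    (e : ℕ → X)
    (hbasis : ∀ x : X, ∃! a : ℕ → ℝ,
      Tendsto (fun N => ∑ n ∈ range N, a n • e n) atTop (nhds x))
    (j0 : ℕ) (hj0 : ∀ n, 0 < p j0 (e n)) :
    ∃ q : Seminorm ℝ X, Continuous q ∧ ∀ x : X, x ≠ 0 → 0 < q x := by
  classical
  choose a haT haU using hbasis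
  set S : (ℕ → ℝ) → ℕ → X := fun c N => ∑ n ∈ range N, c n • e n with hS
  have hS_sub : ∀ c d N, S (c - d) N = S c N - S d N := by
    intro c d N
    simp [S, sub_smul, Finset.sum_sub_distrib]
  have haT' : ∀ x, Tendsto (fun N => S (a x) N) atTop (nhds x) := haT
  have ha_sub : ∀ x y, a (x - y) = a x - a y := by
    intro x y
    refine (haU (x - y) (a x - a y) ?_).symm
    show Tendsto (fun N => S (a x - a y) N) atTop (nhds (x - y))
    have : (fun N => S (a x - a y) N) = fun N => S (a x) N - S (a y) N := by
      funext N; exact hS_sub _ _ _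
    rw [this]
    exact (haT' x).sub (haT' y)
  have ha_zero : a 0 = 0 := by
    refine (haU 0 0 ?_).symm
    simpa [S] using (tendsto_const_nhds : Tendsto (fun _ : ℕ => (0:X)) atTop (nhds 0))
  have ha_smul : ∀ (t : ℝ) x, a (t • x) = t • a x := by
    intro t x
    refine (haU (t • x) (t • a x) ?_).symm
    show Tendsto (fun N => S (t • a x) N) atTop (nhds (t • x))
    have : (fun N => S (t • a x) N) = fun N => t • S (a x) N := by
      funext N; simp [S, smul_smul, Finset.smul_sum]
    rw [this]
    exact (haT' x).const_smul t
  have hption : ∀ j x, Tendsto (fun N => p j (S (a x) N)) atTop (nhds (p j x)) :=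
    fun j x => ((hp.continuous_seminorm j).tendsto x).comp (haT' x)
  have hq_bdd : ∀ j x, BddAbove (Set.range fun N => p j (S (a x) N)) :=
    fun j x => (hption j x).bddAbove_range
  set q : ℕ → X → ℝ := fun j x => ⨆ N, p j (S (a x) N) with hqdef
  have hq_ge : ∀ j x N, p j (S (a x) N) ≤ q j x := fun j x N => le_ciSup (hq_bdd j x) N
  have hq_le : ∀ j x (c : ℝ), (∀ N, p j (S (a x) N) ≤ c) → q j x ≤ c := fun j x c h => ciSup_le h
  have hpq : ∀ j x, p j x ≤ q j x := fun j x =>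
    le_of_tendsto (hption j x) (Eventually.of_forall (hq_ge j x))
  have hq0 : ∀ j x, 0 ≤ q j x := fun j x => (apply_nonneg (p j) x).trans (hpq j x)
  have hq_zero : ∀ j, q j 0 = 0 := by
    intro j
    have : ∀ N, p j (S (a 0) N) = 0 := by intro N; simp [ha_zero, S]
    simp only [hqdef, this, ciSup_const]
  have ha_add : ∀ x y, a (x + y) = a x + a y := by
    intro x y
    have := ha_sub x (-y)
    have hy : a (-y) = -a y := by
      have := ha_sub 0 y; simpa [ha_zero] using this
    simpa [hy, sub_eq_add_neg] using ha_sub x (-y)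
  have hq_add : ∀ j x y, q j (x + y) ≤ q j x + q j y := by
    intro j x y
    refine hq_le _ _ _ fun N => ?_
    have : S (a (x + y)) N = S (a x) N + S (a y) N := by
      simp [ha_add, S, add_smul, Finset.sum_add_distrib]
    rw [this]
    exact (map_add_le_add (p j) _ _).trans (add_le_add (hq_ge j x N) (hq_ge j y N))
  have hq_smul_le : ∀ j (t : ℝ) x, q j (t • x) ≤ |t| * q j x := by
    intro j t x
    refine hq_le _ _ _ fun N => ?_
    have : S (a (t • x)) N = t • S (a x) N := by
      simp [ha_smul, S, smul_smul, Finset.smul_sum]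
    rw [this, map_smul_eq_mul]
    simpa using mul_le_mul_of_nonneg_left (hq_ge j x N) (abs_nonneg t)
  have hq_smul : ∀ j (t : ℝ) x, q j (t • x) = |t| * q j x := by
    intro j t x
    rcases eq_or_ne t 0 with rfl | ht
    · simp [hq_zero j]
    · refine le_antisymm (hq_smul_le j t x) ?_
      have h2 := hq_smul_le j t⁻¹ (t • x)
      rw [inv_smul_smul₀ ht] at h2
      have h3 := mul_le_mul_of_nonneg_left h2 (abs_nonneg t)
      rw [← mul_assoc, abs_inv, mul_inv_cancel₀ (abs_ne_zero.mpr ht), one_mul] at h3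
      exact h3
  have hq_neg : ∀ j x, q j (-x) = q j x := by
    intro j x
    have := hq_smul j (-1) x
    simpa using this
  have hcoef : ∀ x n, |a x n| * p j0 (e n) ≤ 2 * q j0 x := by
    intro x n
    have hsplit : a x n • e n = S (a x) (n + 1) - S (a x) n := by
      simp [S, Finset.sum_range_succ]
    calc |a x n| * p j0 (e n) = p j0 (a x n • e n) := by
          rw [map_smul_eq_mul, Real.norm_eq_abs]
      _ = p j0 (S (a x) (n + 1) - S (a x) n) := by rw [hsplit]
      _ ≤ p j0 (S (a x) (n + 1)) + p j0 (S (a x) n) := map_sub_le_add _ _ _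
      _ ≤ q j0 x + q j0 x := add_le_add (hq_ge _ _ _) (hq_ge _ _ _)
      _ = 2 * q j0 x := by ring
  -- `q j0` is positive on nonzero vectors
  have hq_norm : ∀ x : X, x ≠ 0 → 0 < q j0 x := by
    intro x hx
    rcases lt_or_eq_of_le (hq0 j0 x) with h | h
    · exact h
    -- q j0 x = 0 : all coefficients vanish, so x = 0
    exfalso
    have hzero : ∀ n, a x n = 0 := by
      intro n
      have h1 := hcoef x n
      rw [← h] at h1
      have h2 : |a x n| * p j0 (e n) ≤ 0 := by linarith
      have h3 : 0 ≤ |a x n| * p j0 (e n) :=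
        mul_nonneg (abs_nonneg _) (apply_nonneg _ _)
      have h4 : |a x n| * p j0 (e n) = 0 := le_antisymm h2 h3
      rcases mul_eq_zero.mp h4 with h5 | h5
      · exact abs_eq_zero.mp h5
      · exact absurd h5 (ne_of_gt (hj0 n))
    have hT0 : Tendsto (fun _ : ℕ => (0 : X)) atTop (nhds x) := by
      have : (fun N => S (a x) N) = fun _ : ℕ => (0 : X) := by
        funext N; simp [S, hzero]
      rw [← this]; exact haT' x
    have hpx : ∀ j, p j x = 0 := by
      intro j
      have := (hp.tendsto_nhds (fun _ : ℕ => (0 : X)) x).mp hT0 j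
      refine le_antisymm ?_ (apply_nonneg _ _)
      by_contra hc
      push_neg at hc
      obtain ⟨N, hN⟩ := (this (p j x) hc).exists
      simp only [zero_sub, map_neg_eq_map] at hN
      exact lt_irrefl _ hN
    obtain ⟨j, hj⟩ := hsep x hx
    exact hj (hpx j)
  -- Key limit lemma
  have key : ∀ (y : ℕ → X) (x : X), Tendsto y atTop (nhds x) →
      (∀ j, ∀ ε > (0:ℝ), ∃ L, ∀ K ≥ L, ∀ K' ≥ L, q j (y K - y K') ≤ ε) →
      ∀ j, ∀ ε > (0:ℝ), ∃ L, ∀ K ≥ L, q j (x - y K) ≤ ε := by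
    intro y x hyx hyC
    -- coefficients converge
    have hbn : ∀ n, ∃ b : ℝ, Tendsto (fun K => a (y K) n) atTop (nhds b) := by
      intro n
      apply cauchySeq_tendsto_of_complete
      rw [Metric.cauchySeq_iff']
      intro ε hε
      obtain ⟨L, hL⟩ := hyC j0 (ε * p j0 (e n) / 4)
        (by have := hj0 n; positivity)
      refine ⟨L, fun K hK => ?_⟩
      have h1 : |a (y K) n - a (y L) n| * p j0 (e n) ≤ 2 * (ε * p j0 (e n) / 4) := by
        have := hcoef (y K - y L) n
        rw [ha_sub] at this
        simpa using this.trans (by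
          have := hL K hK L le_rfl
          linarith)
      rw [Real.dist_eq]
      have h2 : |a (y K) n - a (y L) n| ≤ ε / 2 := by
        have hpe := hj0 n
        nlinarith [abs_nonneg (a (y K) n - a (y L) n)]
      linarith [hε]
    choose b hb using hbn
    -- partial sums with coefficients b
    have hTb : ∀ N, Tendsto (fun K => S (a (y K)) N) atTop (nhds (S b N)) := by
      intro N
      apply tendsto_finset_sum
      intro n _
      exact (hb n).smul_const (e n)
    have hSb_cauchy : CauchySeq (S b) := by
      apply aux_cauchy p hp
      intro j ε hε
      obtain ⟨L, hL⟩ := hyC j (ε/4) (by positivity)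
      have hconv := haT' (y L)
      have h8 : ∀ᶠ N in atTop, p j (S (a (y L)) N - y L) < ε/8 :=
        (hp.tendsto_nhds (fun N => S (a (y L)) N) (y L)).mp hconv j (ε/8) (by positivity)
      obtain ⟨N₀, hN₀⟩ := eventually_atTop.mp h8
      refine ⟨N₀, fun N hN M hM => ?_⟩
      have hlim : Tendsto (fun K => p j (S (a (y K)) N - S (a (y K)) M)) atTop
          (nhds (p j (S b N - S b M))) :=
        ((hp.continuous_seminorm j).tendsto _).comp ((hTb N).sub (hTb M))
      have hbound : ∀ᶠ K in atTop, p j (S (a (y K)) N - S (a (y K)) M) ≤ 3*ε/4 := by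
        filter_upwards [eventually_ge_atTop L] with K hK
        have e1 : S (a (y K)) N - S (a (y K)) M
            = (S (a (y K - y L)) N - S (a (y K - y L)) M)
              + (S (a (y L)) N - S (a (y L)) M) := by
          rw [ha_sub, hS_sub, hS_sub]; abel
        rw [e1]
        have t1 : p j (S (a (y K - y L)) N) ≤ ε/4 := (hq_ge j _ N).trans (hL K hK L le_rfl)
        have t2 : p j (S (a (y K - y L)) M) ≤ ε/4 := (hq_ge j _ M).trans (hL K hK L le_rfl)
        have t3 : p j (S (a (y L)) N - S (a (y L)) M) ≤ ε/4 := by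
          have u1 := hN₀ N hN
          have u2 := hN₀ M hM
          have e2 : S (a (y L)) N - S (a (y L)) M
              = (S (a (y L)) N - y L) - (S (a (y L)) M - y L) := by abel
          rw [e2]
          have := map_sub_le_add (p j) (S (a (y L)) N - y L) (S (a (y L)) M - y L)
          linarith
        have h5 := map_add_le_add (p j)
          (S (a (y K - y L)) N - S (a (y K - y L)) M) (S (a (y L)) N - S (a (y L)) M)
        have h6 := map_sub_le_add (p j) (S (a (y K - y L)) N) (S (a (y K - y L)) M)
        linarith
      have := le_of_tendsto hlim hbound
      linarith
    obtain ⟨z, hz⟩ := cauchySeq_tendsto_of_complete hSb_cauchy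
    have hb_eq : b = a z := haU z b hz
    have happ : ∀ j, ∀ ε > (0:ℝ), ∃ L, ∀ K ≥ L, ∀ N,
        p j (S b N - S (a (y K)) N) ≤ ε := by
      intro j ε hε
      obtain ⟨L, hL⟩ := hyC j ε hε
      refine ⟨L, fun K hK N => ?_⟩
      have hlim : Tendsto (fun K' => p j (S (a (y K')) N - S (a (y K)) N)) atTop
          (nhds (p j (S b N - S (a (y K)) N))) :=
        ((hp.continuous_seminorm j).tendsto _).comp ((hTb N).sub tendsto_const_nhds)
      refine le_of_tendsto hlim ?_
      filter_upwards [eventually_ge_atTop L] with K' hK'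
      have e3 : S (a (y K')) N - S (a (y K)) N = S (a (y K' - y K)) N := by
        rw [ha_sub, hS_sub]
      rw [e3]
      exact (hq_ge j _ N).trans (hL K' hK' K hK)
    have hzy : ∀ j, ∀ ε > (0:ℝ), ∃ L, ∀ K ≥ L, p j (z - y K) ≤ ε := by
      intro j ε hε
      obtain ⟨L, hL⟩ := happ j ε hε
      refine ⟨L, fun K hK => ?_⟩
      have hlim : Tendsto (fun N => p j (S b N - S (a (y K)) N)) atTop
          (nhds (p j (z - y K))) :=
        ((hp.continuous_seminorm j).tendsto _).comp (hz.sub (haT' (y K)))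
      exact le_of_tendsto hlim (Eventually.of_forall (hL K hK))
    have hzx : z = x := by
      by_contra hne
      have hd : x - z ≠ 0 := sub_ne_zero.mpr (Ne.symm hne)
      obtain ⟨j, hj⟩ := hsep _ hd
      apply hj
      refine le_antisymm ?_ (apply_nonneg _ _)
      have hfor : ∀ ε > (0:ℝ), p j (x - z) ≤ ε := by
        intro ε hε
        obtain ⟨L, hL⟩ := hzy j (ε/2) (by positivity)
        have h7 : ∀ᶠ K in atTop, p j (y K - x) < ε/2 :=
          (hp.tendsto_nhds y x).mp hyx j (ε/2) (by positivity)
        obtain ⟨K, hK1, hK2⟩ := ((eventually_ge_atTop L).and h7).exists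
        have h9 := hL K hK1
        have e4 : x - z = -(y K - x) - (z - y K) := by abel
        rw [e4]
        have h10 := map_sub_le_add (p j) (-(y K - x)) (z - y K)
        rw [map_neg_eq_map] at h10
        linarith
      have : p j (x - z) ≤ 0 := le_of_forall_pos_le_add (by
        intro ε hε
        rw [zero_add]
        exact hfor ε hε)
      exact this
    intro j ε hε
    obtain ⟨L, hL⟩ := happ j ε hε
    refine ⟨L, fun K hK => ?_⟩
    refine hq_le _ _ _ fun N => ?_
    have hax : a x = b := by rw [hb_eq, hzx]
    have e5 : S (a (x - y K)) N = S b N - S (a (y K)) N := by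
      rw [ha_sub, hS_sub, hax]
    rw [e5]
    exact hL K hK N
  -- Baire category argument
  haveI : BaireSpace X := aux_baire p hp
  haveI : Nonempty X := ⟨0⟩
  set B : ℕ → Set X := fun k => {x | ∀ j ≤ k, q j x ≤ (1/2:ℝ)^k} with hBdef
  have hBneg : ∀ k, -B k = B k := by
    intro k
    ext x
    simp only [Set.mem_neg, hBdef, Set.mem_setOf_eq]
    constructor
    · intro h j hj; have := h j hj; rwa [hq_neg] at this
    · intro h j hj; rw [hq_neg]; exact h j hj
  have hBadd : ∀ k, ∀ u ∈ B (k+1), ∀ v ∈ B (k+1), u + v ∈ B k := by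
    intro k u hu v hv j hj
    have h1 := hu j (hj.trans (Nat.le_succ k))
    have h2 := hv j (hj.trans (Nat.le_succ k))
    have h3 := hq_add j u v
    have h4 : (1/2:ℝ)^(k+1) + (1/2:ℝ)^(k+1) = (1/2:ℝ)^k := by ring
    linarith
  have hBclosure_neg : ∀ k, ∀ x ∈ closure (B k), -x ∈ closure (B k) := by
    intro k x hx
    have : -x ∈ closure (-B k) := by
      refine map_mem_closure continuous_neg hx ?_
      intro w hw
      exact Set.neg_mem_neg.mpr hw
    rwa [hBneg] at this
  have hBnbhd : ∀ k, closure (B k) ∈ nhds (0 : X) := by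
    intro k
    set C := closure (B (k+1)) with hC
    have hCclosed : IsClosed C := isClosed_closure
    have hcover : ∀ x : X, ∃ m : ℕ, (((m:ℕ):ℝ)+1)⁻¹ • x ∈ B (k+1) := by
      intro x
      obtain ⟨m, hm⟩ := exists_nat_ge
        (((range (k+2)).sup' ⟨0, by simp⟩ fun j => q j x) * (2:ℝ)^(k+1))
      refine ⟨m, fun j hj => ?_⟩
      have hmpos : (0:ℝ) < (m:ℝ) + 1 := by positivity
      rw [hq_smul, abs_of_pos (inv_pos.mpr hmpos)]
      have hqle : q j x ≤ ((range (k+2)).sup' ⟨0, by simp⟩ fun j => q j x) :=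
        Finset.le_sup' (fun j => q j x) (by simp [Nat.lt_succ_iff]; omega)
      have hpow : (0:ℝ) < (2:ℝ)^(k+1) := by positivity
      have h2 : q j x ≤ ((m:ℝ)+1) * (1/2:ℝ)^(k+1) := by
        have hhalf : ((m:ℝ)+1) * (1/2:ℝ)^(k+1) = ((m:ℝ)+1) / (2:ℝ)^(k+1) := by
          rw [div_pow, one_pow, div_eq_mul_inv, div_eq_mul_inv, one_mul]
        rw [hhalf, le_div_iff₀ hpow]
        nlinarith
      rw [inv_mul_le_iff₀ hmpos]
      exact h2
    have hcov2 : (⋃ m : ℕ, (fun x : X => (((m:ℕ):ℝ)+1)⁻¹ • x) ⁻¹' C) = Set.univ := by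
      rw [Set.eq_univ_iff_forall]
      intro x
      obtain ⟨m, hm⟩ := hcover x
      exact Set.mem_iUnion.mpr ⟨m, subset_closure hm⟩
    obtain ⟨m, hm⟩ := nonempty_interior_of_iUnion_of_closed
      (fun m : ℕ => hCclosed.preimage (continuous_const_smul _)) hcov2
    have hint : (interior C).Nonempty := by
      obtain ⟨x', hx'⟩ := hm
      have hne : ((((m:ℕ):ℝ)+1)⁻¹ : ℝ) ≠ 0 := by positivity
      have heq : (fun x : X => (((m:ℕ):ℝ)+1)⁻¹ • x) ⁻¹' C
          = (Homeomorph.smulOfNeZero ((((m:ℕ):ℝ)+1)⁻¹) hne) ⁻¹' C := rfl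
      rw [heq, ← Homeomorph.preimage_interior] at hx'
      exact ⟨_, hx'⟩
    obtain ⟨x₀, hx₀⟩ := hint
    have hsub : (fun y => y + -x₀) '' interior C ⊆ closure (B k) := by
      rintro _ ⟨y, hy, rfl⟩
      have hyC : y ∈ C := interior_subset hy
      have hx₀C : -x₀ ∈ C := hBclosure_neg (k+1) x₀ (interior_subset hx₀)
      exact map_mem_closure₂ continuous_add hyC hx₀C
        (fun a ha b hb => hBadd k a ha b hb)
    have hmem : (fun y => y + -x₀) '' interior C ∈ nhds (0 : X) := by
      have hopen : IsOpen ((fun y => y + -x₀) '' interior C) :=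
        (Homeomorph.addRight (-x₀)).isOpenMap _ isOpen_interior
      exact hopen.mem_nhds ⟨x₀, hx₀, by simp⟩
    exact mem_of_superset hmem hsub
  -- closure shrinking via the key lemma
  have hclp : ∀ m j, j ≤ m → ∀ z ∈ closure (B m), p j z ≤ (1/2:ℝ)^m := by
    intro m j hjm z hz
    have hsub : B m ⊆ {w : X | p j w ≤ (1/2:ℝ)^m} := fun w hw => (hpq j w).trans (hw j hjm)
    have hcl : IsClosed {w : X | p j w ≤ (1/2:ℝ)^m} :=
      isClosed_le (hp.continuous_seminorm j) continuous_const
    exact (closure_minimal hsub hcl) hz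
  have hq_sum : ∀ j (s : Finset ℕ) (f : ℕ → X),
      q j (∑ i ∈ s, f i) ≤ ∑ i ∈ s, q j (f i) := by
    intro j s f
    induction s using Finset.cons_induction with
    | empty => simp [hq_zero]
    | cons i s his ih =>
        rw [Finset.sum_cons, Finset.sum_cons]
        exact (hq_add _ _ _).trans (by linarith)
  have hgeom : ∀ K' K : ℕ, ∀ k : ℕ,
      ∑ i ∈ Finset.Ico K' K, (1/2:ℝ)^(k+1+i) ≤ (1/2:ℝ)^(k+K') := by
    intro K' K k
    rcases le_or_gt K' K with h | h
    · rw [Finset.sum_Ico_eq_sum_range]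
      have hterm : ∀ i, (1/2:ℝ)^(k+1+(K'+i)) = (1/2:ℝ)^(k+1+K') * (1/2:ℝ)^i := by
        intro i
        rw [← pow_add]
        congr 1
        omega
      calc ∑ i ∈ range (K-K'), (1/2:ℝ)^(k+1+(K'+i))
          = (1/2:ℝ)^(k+1+K') * ∑ i ∈ range (K-K'), (1/2:ℝ)^i := by
            rw [Finset.mul_sum]
            exact Finset.sum_congr rfl fun i _ => hterm i
        _ ≤ (1/2:ℝ)^(k+1+K') * 2 := by
            have h2 := sum_geometric_two_le (K-K')
            have h3 : (0:ℝ) < (1/2:ℝ)^(k+1+K') := by positivity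
            nlinarith
        _ = (1/2:ℝ)^(k+K') := by
            rw [show k+1+K' = (k+K')+1 from by omega, pow_succ]
            ring
    · rw [Finset.Ico_eq_empty (by omega)]
      simp

  have hBshrink : ∀ k, ∀ x ∈ closure (B (k+1)), ∀ j ≤ k, q j x ≤ (1/2:ℝ)^k := by
    intro k x hx
    have step : ∀ i (z : X), z ∈ closure (B (k+1+i)) →
        ∃ v : X, v ∈ B (k+1+i) ∧ z - v ∈ closure (B (k+1+(i+1))) := by
      intro i z hz
      have hN : closure (B (k+1+(i+1))) ∈ nhds (0:X) := hBnbhd _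
      have hnb : (fun w => z + w) '' closure (B (k+1+(i+1))) ∈ nhds z := by
        have hmap := (Homeomorph.addLeft z).map_nhds_eq (0:X)
        simp only [Homeomorph.coe_addLeft, add_zero] at hmap
        rw [← hmap]
        exact image_mem_map hN
      obtain ⟨u, hu1, hu2⟩ := mem_closure_iff_nhds.mp hz _ hnb
      obtain ⟨w, hw, rfl⟩ := hu1
      refine ⟨z + w, hu2, ?_⟩
      have : z - (z + w) = -w := by abel
      rw [this]
      exact hBclosure_neg _ w hw
    choose vf hv1 hv2 using step
    let w : ∀ i : ℕ, {z : X // z ∈ closure (B (k+1+i))} := fun i =>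
      Nat.rec (motive := fun i => {z : X // z ∈ closure (B (k+1+i))}) ⟨x, hx⟩
        (fun i zi => ⟨zi.1 - vf i zi.1 zi.2, hv2 i zi.1 zi.2⟩) i
    let v : ℕ → X := fun i => vf i (w i).1 (w i).2
    have hw0 : (w 0).1 = x := rfl
    have hwsucc : ∀ i, (w (i+1)).1 = (w i).1 - v i := fun i => rfl
    have hvB : ∀ i, v i ∈ B (k+1+i) := fun i => hv1 i (w i).1 (w i).2
    set y : ℕ → X := fun K => ∑ i ∈ range K, v i with hy
    have hxy : ∀ K, x - y K = (w K).1 := by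
      intro K
      induction K with
      | zero => simp [hy, hw0]
      | succ K ih =>
          rw [hwsucc K, ← ih]
          have : y (K+1) = y K + v K := by simp [hy, Finset.sum_range_succ]
          rw [this]
          abel
    have htend : Tendsto y atTop (nhds x) := by
      rw [hp.tendsto_nhds]
      intro j ε hε
      obtain ⟨K₁, hK₁⟩ := exists_pow_lt_of_lt_one hε (by norm_num : (1/2:ℝ) < 1)
      filter_upwards [eventually_ge_atTop (max j K₁)] with K hK
      have hjK : j ≤ K := le_trans (le_max_left _ _) hK
      have hK₁K : K₁ ≤ K := le_trans (le_max_right _ _) hK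
      have h1 : y K - x = -(x - y K) := by abel
      rw [h1, map_neg_eq_map, hxy K]
      have h2 : p j ((w K).1) ≤ (1/2:ℝ)^(k+1+K) :=
        hclp (k+1+K) j (by omega) _ (w K).2
      have h3 : (1/2:ℝ)^(k+1+K) ≤ (1/2:ℝ)^K₁ :=
        pow_le_pow_of_le_one (by norm_num) (by norm_num) (by omega)
      linarith
    have hyq : ∀ j K' K, j ≤ k+1+K' → K' ≤ K →
        q j (y K - y K') ≤ (1/2:ℝ)^(k+K') := by
      intro j K' K hj hKK
      have hsplit : y K - y K' = ∑ i ∈ Finset.Ico K' K, v i := by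
        rw [hy]
        exact (Finset.sum_Ico_eq_sub _ hKK).symm
      rw [hsplit]
      refine (hq_sum j _ _).trans ?_
      refine le_trans (Finset.sum_le_sum fun i hi => ?_) (hgeom K' K k)
      have hiK : K' ≤ i := (Finset.mem_Ico.mp hi).1
      exact hvB i j (by omega)
    have hyCau : ∀ j, ∀ ε > (0:ℝ), ∃ L, ∀ K ≥ L, ∀ K' ≥ L, q j (y K - y K') ≤ ε := by
      intro j ε hε
      obtain ⟨L₀, hL₀⟩ := exists_pow_lt_of_lt_one hε (by norm_num : (1/2:ℝ) < 1)
      refine ⟨max j L₀, fun K hK K' hK' => ?_⟩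
      have hbound : ∀ A B2 : ℕ, max j L₀ ≤ A → A ≤ B2 → q j (y B2 - y A) ≤ ε := by
        intro A B2 hA hAB
        have hjA : j ≤ A := le_trans (le_max_left _ _) hA
        refine (hyq j A B2 (by omega) hAB).trans ?_
        have h4 : (1/2:ℝ)^(k+A) ≤ (1/2:ℝ)^L₀ :=
          pow_le_pow_of_le_one (by norm_num) (by norm_num)
            (by have := le_trans (le_max_right j L₀) hA; omega)
        linarith
      rcases le_total K' K with h | h
      · exact hbound K' K hK' h
      · have := hbound K K' hK h
        rw [show y K - y K' = -(y K' - y K) from by abel, hq_neg] at *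
        exact this
    intro j hj
    have hyb : ∀ K, q j (y K) ≤ (1/2:ℝ)^k := by
      intro K
      have h0 : y 0 = (0:X) := by simp [hy]
      have := hyq j 0 K (by omega) (Nat.zero_le K)
      simpa [h0] using this
    refine le_of_forall_pos_le_add ?_
    intro ε hε
    obtain ⟨L, hL⟩ := key y x htend hyCau j ε hε
    have h1 := hL L le_rfl
    have h2 : q j x ≤ q j (x - y L) + q j (y L) := by
      have e6 : x = (x - y L) + y L := by abel
      calc q j x = q j ((x - y L) + y L) := by rw [← e6]
        _ ≤ q j (x - y L) + q j (y L) := hq_add _ _ _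
    have h3 := hyb L
    linarith
  -- assemble the continuous norm
  refine ⟨{ toFun := q j0, map_zero' := hq_zero j0, add_le' := hq_add j0,
            neg' := hq_neg j0,
            smul' := fun t x => by
              show q j0 (t • x) = ‖t‖ * q j0 x
              rw [hq_smul j0 t x, Real.norm_eq_abs] }, ?_, ?_⟩
  · apply Seminorm.continuous_of_forall'
    intro r hr
    obtain ⟨k₀, hk₀⟩ := exists_pow_lt_of_lt_one hr (by norm_num : (1/2:ℝ) < 1)
    set k := max j0 k₀ with hk
    refine mem_of_superset (hBnbhd (k+1)) ?_
    intro x hx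
    have h1 := hBshrink k x hx j0 (le_max_left _ _)
    have h2 : (1/2:ℝ)^k ≤ (1/2:ℝ)^k₀ :=
      pow_le_pow_of_le_one (by norm_num) (by norm_num) (le_max_right _ _)
    rw [Seminorm.mem_closedBall_zero]
    show q j0 x ≤ r
    linarith
  · exact fun x hx => hq_norm x hx

/-- A Fréchet space with a Schauder basis `(e_n)` possesses a
continuous norm iff there exists `j` with `p j (e n) > 0` for every `n`. -/
theorem stmt_4 {X : Type*} [AddCommGroup X] [Module ℝ X] [UniformSpace X]
    [IsUniformAddGroup X] [CompleteSpace X] [ContinuousSMul ℝ X]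
    (p : SeminormFamily ℝ X ℕ) (hp : WithSeminorms p)
    (hmono : Monotone p) (hsep : ∀ x : X, x ≠ 0 → ∃ j, p j x ≠ 0)
    (e : ℕ → X)
    (hbasis : ∀ x : X, ∃! a : ℕ → ℝ,
      Tendsto (fun N => ∑ n ∈ range N, a n • e n) atTop (nhds x)) :
    (∃ q : Seminorm ℝ X, Continuous q ∧ ∀ x : X, x ≠ 0 → 0 < q x) ↔
      ∃ j : ℕ, ∀ n : ℕ, 0 < p j (e n) := by
  constructor
  · rintro ⟨Q, hQc, hQpos⟩
    have hen : ∀ n, e n ≠ 0 := by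
      intro n hn
      obtain ⟨c, hc, hun⟩ := hbasis 0
      have h1 : (fun m => if m = n then (1:ℝ) else 0) = c := by
        apply hun
        have hzz : (fun N => ∑ m ∈ range N, (if m = n then (1:ℝ) else 0) • e m)
            = fun _ : ℕ => (0:X) := by
          funext N
          apply Finset.sum_eq_zero
          intro m hm
          by_cases h : m = n
          · subst h; simp [hn]
          · simp [h]
        rw [hzz]
        exact tendsto_const_nhds
      have h2 : (0 : ℕ → ℝ) = c := by
        apply hun
        simpa using (tendsto_const_nhds : Tendsto (fun _ : ℕ => (0:X)) atTop (nhds 0))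
      have h3 := congrFun (h1.trans h2.symm) n
      simp at h3
    have h0 : {x : X | Q x < 1} ∈ nhds (0:X) := by
      have hca : ContinuousAt Q 0 := hQc.continuousAt
      have := hca.preimage_mem_nhds (Iio_mem_nhds (by rw [map_zero]; norm_num : Q 0 < 1))
      simpa [Set.preimage, Set.mem_Iio] using this
    obtain ⟨sr, hsr, hsub⟩ := hp.hasBasis_zero_ball.mem_iff.mp h0
    set J := sr.1.sup id with hJ
    have hsup_le : ∀ x, sr.1.sup p x ≤ p J x := by
      intro x
      have h4 : sr.1.sup p ≤ p J :=
        Finset.sup_le fun i hi => hmono (Finset.le_sup (f := id) hi)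
      exact h4 x
    refine ⟨J, fun n => ?_⟩
    by_contra hc
    push_neg at hc
    have hz : p J (e n) = 0 := le_antisymm hc (apply_nonneg _ _)
    have hQen : ∀ t : ℝ, |t| * Q (e n) < 1 := by
      intro t
      have hball : (t • e n) ∈ (sr.1.sup p).ball 0 sr.2 := by
        rw [Seminorm.mem_ball_zero]
        calc sr.1.sup p (t • e n) ≤ p J (t • e n) := hsup_le _
          _ = |t| * p J (e n) := by rw [map_smul_eq_mul, Real.norm_eq_abs]
          _ = 0 := by rw [hz, mul_zero]
          _ < sr.2 := hsr
      have h5 := hsub hball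
      simp only [Set.mem_setOf_eq] at h5
      rwa [map_smul_eq_mul, Real.norm_eq_abs] at h5
    have hpos := hQpos (e n) (hen n)
    have h6 := hQen (2 / Q (e n))
    rw [abs_of_pos (by positivity), div_mul_cancel₀ _ (ne_of_gt hpos)] at h6
    norm_num at h6
  · rintro ⟨j, hj⟩
    exact main_hard p hp hsep e hbasis j hj
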